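/- The map H defined by (Hf)(t) = 2f(2t − 1/2) for 1/4 < t < 3/4 and (Hf)(t) = 0 otherwise is a linear isometry from L^1[0,1] onto the subspace of functions supported in (1/4,3/4), where the target carries the norm ‖g‖* = ‖g·χ_{[0,1/4]∪[3/4,1]}‖_{C(p)} + ‖g·χ_{(1/4,3/4)}‖_{L^1}; in particular ‖Hf‖* = ‖f‖_{L^1} for all f ∈ L^1[0,1]. -/
import Mathlib


open MeasureTheory Set

/-- The Cesàro norm on `[0,1]`. -/
noncomputable def cesNorm (p : ℝ) (f : ℝ → ℝ) : ℝ :=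
  (∫ x in Set.Ioc (0 : ℝ) 1, ((1 / x) * ∫ t in Set.Ioc (0 : ℝ) x, |f t|) ^ p) ^ (1 / p)

/-- The equivalent norm `‖g‖* = ‖g·χ_{[0,1/4]∪[3/4,1]}‖_{C(p)} + ‖g·χ_{(1/4,3/4)}‖_{L^1}`. -/
noncomputable def starNorm (p : ℝ) (f : ℝ → ℝ) : ℝ :=
  cesNorm p ((Set.Icc (0 : ℝ) (1/4) ∪ Set.Icc (3/4 : ℝ) 1).indicator f)
    + ∫ t in Set.Ioo (1/4 : ℝ) (3/4), |f t|

/-- The map `(Hf)(t) = 2f(2t - 1/2)` on `(1/4,3/4)`, `0` elsewhere. -/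
noncomputable def Hmap (f : ℝ → ℝ) : ℝ → ℝ := fun t =>
  if t ∈ Set.Ioo (1/4 : ℝ) (3/4) then 2 * f (2 * t - 1/2) else 0

/-- `H` is a linear isometry from `L^1[0,1]` onto the subspace of functions supported in
`(1/4,3/4)`, the target carrying the norm `‖·‖*`; in particular `‖Hf‖* = ‖f‖_{L^1}`. -/
theorem Hmap_isometry_onto (p : ℝ) (hp : 1 ≤ p) :
    (∀ f g : ℝ → ℝ, Hmap (f + g) = Hmap f + Hmap g) ∧
    (∀ (c : ℝ) (f : ℝ → ℝ), Hmap (c • f) = c • Hmap f) ∧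
    (∀ f : ℝ → ℝ, Measurable f → IntegrableOn f (Set.Ioc (0 : ℝ) 1) →
      starNorm p (Hmap f) = ∫ t in Set.Ioc (0 : ℝ) 1, |f t|) ∧
    (∀ g : ℝ → ℝ, Function.support g ⊆ Set.Ioo (1/4 : ℝ) (3/4) → ∃ f : ℝ → ℝ, Hmap f = g) := by
  have hp0 : p ≠ 0 := by positivity
  refine ⟨?_, ?_, ?_, ?_⟩
  · intro f g
    funext t
    by_cases ht : t ∈ Set.Ioo (1/4 : ℝ) (3/4) <;>
      simp only [Hmap, Pi.add_apply, if_pos, if_neg, ht, if_true, if_false] <;> ring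
  · intro c f
    funext t
    by_cases ht : t ∈ Set.Ioo (1/4 : ℝ) (3/4) <;>
      simp only [Hmap, Pi.smul_apply, smul_eq_mul, ht, if_true, if_false] <;> ring
  · intro f hf hfi
    have h0 : (Set.Icc (0 : ℝ) (1/4) ∪ Set.Icc (3/4 : ℝ) 1).indicator (Hmap f)
        = fun _ => (0 : ℝ) := by
      funext t
      by_cases ht : t ∈ Set.Icc (0 : ℝ) (1/4) ∪ Set.Icc (3/4 : ℝ) 1
      · have hnt : t ∉ Set.Ioo (1/4 : ℝ) (3/4) := by
          rcases ht with h | h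
          · exact fun hm => absurd hm.1 (not_lt.mpr h.2)
          · exact fun hm => absurd hm.2 (not_lt.mpr h.1)
        rw [Set.indicator_of_mem ht]
        simp only [Hmap, if_neg hnt]
      · rw [Set.indicator_of_notMem ht]
    have hces : cesNorm p ((Set.Icc (0 : ℝ) (1/4) ∪ Set.Icc (3/4 : ℝ) 1).indicator (Hmap f))
        = 0 := by
      rw [h0]
      simp [cesNorm, Real.zero_rpow hp0, Real.zero_rpow (one_div_ne_zero hp0),
        Real.zero_rpow (inv_ne_zero hp0)]
    have hL1 : (∫ t in Set.Ioo (1/4 : ℝ) (3/4), |Hmap f t|)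
        = ∫ t in Set.Ioc (0 : ℝ) 1, |f t| := by
      have hcongr : (∫ t in Set.Ioo (1/4 : ℝ) (3/4), |Hmap f t|)
          = ∫ t in Set.Ioo (1/4 : ℝ) (3/4), 2 * |f (2 * t + (-(1/2)))| := by
        refine setIntegral_congr_fun measurableSet_Ioo (fun t ht => ?_)
        simp only [Hmap, if_pos ht, abs_mul, abs_two, sub_eq_add_neg]
      rw [hcongr]
      have h1 : (∫ t in Set.Ioo (1/4 : ℝ) (3/4), 2 * |f (2 * t + (-(1/2)))|)
          = ∫ t in (1/4 : ℝ)..(3/4), 2 * |f (2 * t + (-(1/2)))| := by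
        rw [intervalIntegral.integral_of_le (by norm_num), integral_Ioc_eq_integral_Ioo]
      rw [h1, intervalIntegral.integral_const_mul,
        intervalIntegral.integral_comp_mul_add (fun u => |f u|) two_ne_zero (-(1/2))]
      rw [intervalIntegral.integral_of_le (by norm_num : (2 : ℝ) * (1/4) + -(1/2) ≤ 2 * (3/4) + -(1/2))]
      norm_num
      ring
    rw [starNorm, hces, hL1, zero_add]
  · intro g hg
    refine ⟨fun u => (1/2) * g (u/2 + 1/4), ?_⟩
    funext t
    by_cases ht : t ∈ Set.Ioo (1/4 : ℝ) (3/4)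
    · simp only [Hmap, if_pos ht]
      rw [show (2 * t - 1/2)/2 + 1/4 = t by ring]
      ring
    · simp only [Hmap, if_neg ht]
      by_contra h
      exact ht (hg (Function.mem_support.mpr fun hz => h hz.symm))
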